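/- Let G be a locally compact group, η ∈ L²(G) a continuous square-integrable function, and (U_n) a decreasing neighborhood base at the identity of finite positive Haar measure. If η is orthogonal to ρ(s)χ_{U_n} for all s ∈ G and all n, then η = 0, where ρ is the right regular representation. -/

import Mathlib

open MeasureTheory
open scoped InnerProductSpace ENNReal

variable {G : Type*} [Group G] [TopologicalSpace G] [IsTopologicalGroup G] [T2Space G]
  [LocallyCompactSpace G] [MeasurableSpace G] [BorelSpace G]

/-- The von Neumann algebra (as a set of operators) generated by a set `S` of operators:
its double commutant. -/
def VNset {E : Type*} [NormedAddCommGroup E] [InnerProductSpace ℂ E]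
    (S : Set (E →L[ℂ] E)) : Set (E →L[ℂ] E) :=
  Set.centralizer (Set.centralizer S)

/-- `ξ` is a cyclic vector for the representation `π`: the span of its orbit is dense. -/
def IsCyclicVector {E : Type*} [NormedAddCommGroup E] [InnerProductSpace ℂ E]
    (π : G → (E →L[ℂ] E)) (ξ : E) : Prop :=
  (Submodule.span ℂ (Set.range fun s => π s ξ)).topologicalClosure = ⊤

/-- `ω` is a normal state on the set of operators `M`: on `M` it is given by a countable
convex combination of vector states (the standard form of normal states). -/
def IsNormalStateS {E : Type*} [NormedAddCommGroup E] [InnerProductSpace ℂ E]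
    (M : Set (E →L[ℂ] E)) (ω : (E →L[ℂ] E) → ℂ) : Prop :=
  ∃ ξ : ℕ → E, (∑' n, ‖ξ n‖ ^ 2) = 1 ∧ ∀ T ∈ M, ω T = ∑' n, ⟪T (ξ n), ξ n⟫_ℂ

/-- `ω` is faithful on `M`: it is nonzero on every nonzero positive element of `M`. -/
def IsFaithfulS {E : Type*} [NormedAddCommGroup E] [InnerProductSpace ℂ E]
    [CompleteSpace E] (M : Set (E →L[ℂ] E)) (ω : (E →L[ℂ] E) → ℂ) : Prop :=
  ∀ T : E →L[ℂ] E, T ∈ M → T.IsPositive → ω T = 0 → T = 0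

/-- A von Neumann algebra (given as a set of operators) is σ-finite if it admits a
faithful normal state. -/
def IsSigmaFiniteVN {E : Type*} [NormedAddCommGroup E] [InnerProductSpace ℂ E]
    [CompleteSpace E] (M : Set (E →L[ℂ] E)) : Prop :=
  ∃ ω : (E →L[ℂ] E) → ℂ, IsNormalStateS M ω ∧ IsFaithfulS M ω

/-- If a continuous square-integrable function `η` is orthogonal to `ρ(s)χ_{U n}` for all
`s ∈ G` and all `n`, where `(U n)` is a decreasing neighborhood base at the identity of
finite positive Haar measure, then `η = 0`. -/
theorem continuous_orthogonal_to_translates_of_indicators_eq_zero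
    (μ : Measure G) [μ.IsHaarMeasure]
    (Δ : G → ℝ) (hΔ : ∀ s : G, 0 < Δ s ∧ μ.map (· * s) = (ENNReal.ofReal (Δ s))⁻¹ • μ)
    (rho : G → (Lp ℂ 2 μ →L[ℂ] Lp ℂ 2 μ))
    (hrho : ∀ (s : G) (f : Lp ℂ 2 μ),
      (rho s f : G → ℂ) =ᵐ[μ] fun t => (Real.sqrt (Δ s) : ℂ) * f (t * s))
    (η : G → ℂ) (hη : Continuous η) (ηL : Lp ℂ 2 μ) (hηL : (ηL : G → ℂ) =ᵐ[μ] η)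
    (U : ℕ → Set G) (hUdec : Antitone U)
    (hU : (nhds (1 : G)).HasBasis (fun _ : ℕ => True) U)
    (hUmeas : ∀ n, MeasurableSet (U n)) (hUpos : ∀ n, 0 < μ (U n)) (hUfin : ∀ n, μ (U n) < ⊤)
    (χ : ℕ → Lp ℂ 2 μ)
    (hχ : ∀ n, (χ n : G → ℂ) =ᵐ[μ] (U n).indicator (fun _ => (1:ℂ)))
    (horth : ∀ (s : G) (n : ℕ), ⟪ηL, rho s (χ n)⟫_ℂ = 0) :
    η = 0 := by
  funext x
  simp only [Pi.zero_apply]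
  set s := x⁻¹ with hs
  have hΔs : 0 < Δ s := (hΔ s).1
  have hmap := (hΔ s).2
  have hmeas : Measurable (fun t : G => t * s) := measurable_mul_const s
  have hqmp : Measure.QuasiMeasurePreserving (fun t : G => t * s) μ μ := by
    refine ⟨hmeas, ?_⟩
    rw [hmap]
    exact Measure.smul_absolutelyContinuous
  set A : ℕ → Set G := fun n => (fun t : G => t * s) ⁻¹' U n with hA
  have hAmeas : ∀ n, MeasurableSet (A n) := fun n => hmeas (hUmeas n)
  have hAμ : ∀ n, μ (A n) = (ENNReal.ofReal (Δ s))⁻¹ * μ (U n) := by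
    intro n
    have h := congrArg (fun ν : Measure G => ν (U n)) hmap
    simpa [Measure.map_apply hmeas (hUmeas n), Measure.smul_apply, smul_eq_mul] using h
  have hofR : ENNReal.ofReal (Δ s) ≠ 0 := by
    simp [ENNReal.ofReal_eq_zero, not_le, hΔs]
  have hApos : ∀ n, 0 < μ (A n) := by
    intro n
    rw [hAμ n]
    exact ENNReal.mul_pos (by simp [ENNReal.inv_ne_zero]) (hUpos n).ne'
  have hAfin : ∀ n, μ (A n) < ⊤ := by
    intro n
    rw [hAμ n]
    exact ENNReal.mul_lt_top (ENNReal.inv_lt_top.2 (ENNReal.ofReal_pos.2 hΔs)) (hUfin n)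
  have hsqrt : (Real.sqrt (Δ s) : ℂ) ≠ 0 := by
    simp [Complex.ofReal_eq_zero, Real.sqrt_eq_zero', not_le, hΔs]
  -- the key integral identity
  have hint : ∀ n, IntegrableOn η (A n) μ ∧ ∫ t in A n, η t ∂μ = 0 := by
    intro n
    have h0 := horth s n
    rw [MeasureTheory.L2.inner_def] at h0
    have hI := MeasureTheory.L2.integrable_inner (𝕜 := ℂ) ηL (rho s (χ n))
    have hcomp : (fun t => (χ n : G → ℂ) (t * s)) =ᵐ[μ]
        fun t => (U n).indicator (fun _ => (1:ℂ)) (t * s) := hqmp.ae_eq_comp (hχ n)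
    have hae : (fun t => ⟪(ηL : G → ℂ) t, (rho s (χ n) : G → ℂ) t⟫_ℂ) =ᵐ[μ]
        fun t => (Real.sqrt (Δ s) : ℂ) *
          (A n).indicator (fun u => (starRingEnd ℂ) (η u)) t := by
      filter_upwards [hηL, hrho s (χ n), hcomp] with t h1 h2 h3
      simp only [RCLike.inner_apply, h1, h2, h3]
      by_cases ht : t ∈ A n
      · have : t * s ∈ U n := ht
        simp [Set.indicator_of_mem ht, Set.indicator_of_mem this]
      · have : t * s ∉ U n := ht
        simp [Set.indicator_of_notMem ht, Set.indicator_of_notMem this]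
    have hI2 : Integrable (fun t => (Real.sqrt (Δ s) : ℂ) *
        (A n).indicator (fun u => (starRingEnd ℂ) (η u)) t) μ := hI.congr hae
    have hI3 : Integrable ((A n).indicator (fun u => (starRingEnd ℂ) (η u))) μ := by
      have := hI2.const_mul ((Real.sqrt (Δ s) : ℂ))⁻¹
      simpa [← mul_assoc, inv_mul_cancel₀ hsqrt] using this
    rw [integrable_indicator_iff (hAmeas n)] at hI3
    have hIη : IntegrableOn η (A n) μ := by
      refine (integrable_norm_iff (hη.aestronglyMeasurable.restrict)).1 ?_
      have := hI3.norm
      simpa [RCLike.norm_conj] using this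
    refine ⟨hIη, ?_⟩
    have h4 : ∫ t, ⟪(ηL : G → ℂ) t, (rho s (χ n) : G → ℂ) t⟫_ℂ ∂μ
        = (Real.sqrt (Δ s) : ℂ) * ∫ t in A n, (starRingEnd ℂ) (η t) ∂μ := by
      rw [integral_congr_ae hae, integral_const_mul,
        integral_indicator (hAmeas n)]
    rw [h4] at h0
    have h5 : ∫ t in A n, (starRingEnd ℂ) (η t) ∂μ = 0 := by
      rcases mul_eq_zero.1 h0 with h | h
      · exact absurd h hsqrt
      · exact h
    have := congrArg (starRingEnd ℂ) h5
    simpa [← integral_conj] using this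
  -- now show ‖η x‖ ≤ ε for all positive ε
  have key : ∀ ε : ℝ, 0 < ε → ‖η x‖ ≤ ε := by
    intro ε hε
    have hV : {t : G | ‖η t - η x‖ ≤ ε} ∈ nhds x := by
      have hcont : ContinuousAt η x := hη.continuousAt
      have := hcont (Metric.closedBall_mem_nhds (η x) hε)
      refine Filter.mem_of_superset this ?_
      intro t ht
      simpa [Metric.mem_closedBall, dist_eq_norm] using ht
    have hV1 : (fun u : G => u * x) ⁻¹' {t : G | ‖η t - η x‖ ≤ ε} ∈ nhds (1 : G) := by
      have hc : Continuous (fun u : G => u * x) := continuous_mul_right x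
      have hcx := hc.continuousAt (x := (1 : G))
      have h1x : {t : G | ‖η t - η x‖ ≤ ε} ∈ nhds ((fun u : G => u * x) 1) := by
        simpa using hV
      exact hcx h1x
    obtain ⟨n, -, hn⟩ := hU.mem_iff.1 hV1
    have hsub : ∀ t ∈ A n, ‖η t - η x‖ ≤ ε := by
      intro t ht
      have h1 : t * s ∈ U n := ht
      have h2 := hn h1
      simpa [hs, mul_assoc] using h2
    obtain ⟨hIη, hInt0⟩ := hint n
    set m : ℝ := (μ (A n)).toReal with hm
    have hmpos : 0 < m := ENNReal.toReal_pos (hApos n).ne' (hAfin n).ne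
    have hconst : ∫ _ in A n, η x ∂μ = (m : ℝ) • η x := by
      rw [setIntegral_const]
      rfl
    have hdiff : ∫ t in A n, (η t - η x) ∂μ = -(m • η x) := by
      rw [integral_sub hIη (integrableOn_const (hAfin n).ne), hInt0, hconst]
      simp
    have hbound : ‖∫ t in A n, (η t - η x) ∂μ‖ ≤ ε * m :=
      norm_setIntegral_le_of_norm_le_const_ae' (hAfin n)
        (Filter.Eventually.of_forall hsub)
    rw [hdiff] at hbound
    simp only [norm_neg, norm_smul, Real.norm_eq_abs, abs_of_pos hmpos] at hbound
    rw [mul_comm m] at hbound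
    exact le_of_mul_le_mul_right hbound hmpos
  by_contra h
  have hpos : 0 < ‖η x‖ := by simpa [norm_pos_iff] using h
  have := key (‖η x‖ / 2) (by linarith)
  linarith
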